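/- Let x₀, ẋ₀, y₀, ẏ₀, v₀, v̇₀ ∈ ℝ, let X(u) = x₀ + ẋ₀(2 + u₋) − ẋ₀/(1 + u₊), Y(u) = y₀ + ẏ₀ u₋ + ẏ₀/(1 − u₊), V(u) = v₀ + v̇₀(1 + u) + ẏ₀² u₊²/(1 − u) − ẋ₀² u₊²/(1 + u) for u < 1, and write x̂ := x₀ + ẋ₀, ŷ := y₀ + ẏ₀. Then the v-part of the discontinuous transformation, v = V + X²(u+1)θ(u) + Y²(u−1)θ(u), maps these geodesics of the continuous metric exactly onto the distributional v-geodesic of the impulsive plane wave with profile f(x,y) = x² − y²: for every u ∈ (0, 1), V(u) + X(u)²(u + 1) + Y(u)²(u − 1) = v₀ + v̇₀(1 + u) + (x̂² − ŷ²) + [2x̂ ẋ₀ + x̂² − 2ŷ ẏ₀ + ŷ²] u, and for every u ∈ (−∞, 0], V(u) = v₀ + v̇₀(1 + u). -/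
import Mathlib


open Set

/-- The kink function `u₊ = u θ(u)`. -/
noncomputable def uplus (u : ℝ) : ℝ := max u 0

/-- The function `u₋ = u θ(-u)`. -/
noncomputable def uminus (u : ℝ) : ℝ := min u 0

/-- The `X`-geodesic of the impulsive plane wave in continuous (Rosen-type) coordinates,
with `X(-1) = x₀`, `X'(-1) = ẋ₀`. -/
noncomputable def Xgeo (x₀ xdot0 : ℝ) (u : ℝ) : ℝ :=
  x₀ + xdot0 * (2 + uminus u) - xdot0 / (1 + uplus u)

/-- The `Y`-geodesic of the impulsive plane wave in continuous (Rosen-type) coordinates,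
with `Y(-1) = y₀`, `Y'(-1) = ẏ₀`. -/
noncomputable def Ygeo (y₀ ydot0 : ℝ) (u : ℝ) : ℝ :=
  y₀ + ydot0 * uminus u + ydot0 / (1 - uplus u)

/-- The `V`-geodesic of the impulsive plane wave in continuous (Rosen-type) coordinates,
with `V(-1) = v₀`, `V'(-1) = v̇₀`. -/
noncomputable def Vgeo (v₀ vdot0 xdot0 ydot0 : ℝ) (u : ℝ) : ℝ :=
  v₀ + vdot0 * (1 + u) + ydot0 ^ 2 * (uplus u) ^ 2 / (1 - u)
    - xdot0 ^ 2 * (uplus u) ^ 2 / (1 + u)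

/-- The `v`-part of the discontinuous transformation,
`v = V + X²(u+1)θ(u) + Y²(u-1)θ(u)`, maps the geodesics of the continuous metric exactly
onto the distributional `v`-geodesic of the impulsive plane wave with profile
`f(x,y) = x² - y²`, where `x̂ = x₀ + ẋ₀`, `ŷ = y₀ + ẏ₀`. -/
theorem transformation_maps_v_geodesic (x₀ xdot0 y₀ ydot0 v₀ vdot0 : ℝ) :
    (∀ u ∈ Ioo (0:ℝ) 1,
      Vgeo v₀ vdot0 xdot0 ydot0 u + (Xgeo x₀ xdot0 u) ^ 2 * (u + 1)
          + (Ygeo y₀ ydot0 u) ^ 2 * (u - 1)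
        = v₀ + vdot0 * (1 + u) + ((x₀ + xdot0) ^ 2 - (y₀ + ydot0) ^ 2)
          + (2 * (x₀ + xdot0) * xdot0 + (x₀ + xdot0) ^ 2
             - 2 * (y₀ + ydot0) * ydot0 + (y₀ + ydot0) ^ 2) * u) ∧
    (∀ u ≤ (0:ℝ), Vgeo v₀ vdot0 xdot0 ydot0 u = v₀ + vdot0 * (1 + u)) := by
  constructor
  · rintro u ⟨hu0, hu1⟩
    have hup : uplus u = u := max_eq_left hu0.le
    have hum : uminus u = 0 := min_eq_right hu0.le
    have h1 : 1 - u ≠ 0 := by linarith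
    have h2 : 1 + u ≠ 0 := by linarith
    simp only [Vgeo, Xgeo, Ygeo, hup, hum]
    field_simp
    ring
  · intro u hu
    have hup : uplus u = 0 := max_eq_right hu
    simp [Vgeo, hup]
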